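/- arXiv:1508.02013 — 2 statements merged into one kernel-verified Lean document; each statement's English description precedes it below -/
import Mathlib

section
/- Let F_d^l be defined by recursion on d: F₁^l(ω^l·n_l + ... + ω⁰·n₀) = (n_l,...,n₀), and F_{d+1}^l(α₁,...,α_{d+1}) = (CP(α₁,α₂), CC(α₁,α₂), F_d^l(CE(α₁,α₂),...,CE(α_d,α_{d+1}))). Then for all ordinals α₁,...,α_{d+1} below ω_d(l+1): if F_d^l(α₁,...,α_d) ≤ F_d^l(α₂,...,α_{d+1}) coordinatewise, then α₁ ≤ α₂. -/
open ONote

/-- The list of terms `(exponent, coefficient)` of the Cantor normal form. -/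
def terms : ONote → List (ONote × ℕ+)
  | ONote.zero => []
  | ONote.oadd e n a => (e, n) :: terms a

open Classical in
/-- Comparison position: the least (1-based) index at which the Cantor normal
forms of `α` and `β` differ (missing terms are treated as `0`, so they differ
from any actual term); `0` if the normal forms coincide. -/
noncomputable def CP (α β : ONote) : ℕ :=
  if h : ∃ i, (terms α)[i]? ≠ (terms β)[i]? then Nat.find h + 1 else 0

/-- Comparison coefficient: the coefficient of `α` at position `CP α β`,
with the convention that it is `0` when `CP α β = 0` or when `α` has no
term at that position. -/
noncomputable def CC (α β : ONote) : ℕ :=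
  match CP α β with
  | 0 => 0
  | i + 1 => (((terms α)[i]?).map (fun p => ((p.2 : ℕ+) : ℕ))).getD 0

/-- Comparison exponent: the exponent of `α` at position `CP α β`,
with the convention that it is `0` when `CP α β = 0` or when `α` has no
term at that position. -/
noncomputable def CE (α β : ONote) : ONote :=
  match CP α β with
  | 0 => ONote.zero
  | i + 1 => (((terms α)[i]?).map (fun p => p.1)).getD ONote.zero

theorem terms_inj : ∀ {α β : ONote}, terms α = terms β → α = β
  | ONote.zero, ONote.zero, _ => rfl
  | ONote.zero, ONote.oadd _ _ _, h => by simp [terms] at h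
  | ONote.oadd _ _ _, ONote.zero, h => by simp [terms] at h
  | ONote.oadd e n a, ONote.oadd e' n' a', h => by
      simp only [terms, List.cons.injEq, Prod.mk.injEq] at h
      obtain ⟨⟨h1, h2⟩, h3⟩ := h
      rw [h1, h2, terms_inj h3]

theorem nf_of_mem_terms : ∀ {α : ONote}, α.NF → ∀ p ∈ terms α, ONote.NF p.1
  | ONote.zero, _, p, hp => by simp [terms] at hp
  | ONote.oadd e n a, h, p, hp => by
      simp only [terms, List.mem_cons] at hp
      rcases hp with rfl | hp
      · exact h.fst
      · exact nf_of_mem_terms h.snd p hp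

theorem terms_below : ∀ {α : ONote} {b}, α.NFBelow b → ∀ p ∈ terms α, ONote.repr p.1 < b
  | ONote.zero, _, _, p, hp => by simp [terms] at hp
  | ONote.oadd e n a, b, h, p, hp => by
      simp only [terms, List.mem_cons] at hp
      rcases hp with rfl | hp
      · exact h.lt
      · exact lt_trans (terms_below h.snd p hp) h.lt

theorem pairwise_terms : ∀ {α : ONote}, α.NF →
    (terms α).Pairwise (fun p q : ONote × ℕ+ => ONote.repr q.1 < ONote.repr p.1)
  | ONote.zero, _ => by simp [terms]
  | ONote.oadd e n a, h => by
      simp only [terms, List.pairwise_cons]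
      exact ⟨fun p hp => terms_below h.snd' p hp, pairwise_terms h.snd⟩

theorem firstDiff : ∀ {α β : ONote}, α.NF → β.NF → ONote.repr β < ONote.repr α →
    ∃ (i : ℕ) (e : ONote) (n : ℕ+), (∀ j < i, (terms α)[j]? = (terms β)[j]?) ∧
      (terms α)[i]? = some (e, n) ∧
      ((terms β)[i]? = none ∨ ∃ e' n', (terms β)[i]? = some (e', n') ∧
        (ONote.repr e' < ONote.repr e ∨ (e' = e ∧ (n' : ℕ) < (n : ℕ))))
  | ONote.zero, β, _, _, hlt => by simp [ONote.repr] at hlt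
  | ONote.oadd e₁ n₁ a₁, ONote.zero, _, _, _ =>
      ⟨0, e₁, n₁, by omega, rfl, Or.inl rfl⟩
  | ONote.oadd e₁ n₁ a₁, ONote.oadd e₂ n₂ a₂, h₁, h₂, hlt => by
    rcases lt_trichotomy (ONote.repr e₂) (ONote.repr e₁) with he | he | he
    · exact ⟨0, e₁, n₁, by omega, rfl, Or.inr ⟨e₂, n₂, rfl, Or.inl he⟩⟩
    · haveI := h₁.fst; haveI := h₂.fst
      have hee : e₂ = e₁ := ONote.repr_inj.1 he
      subst hee
      rcases lt_trichotomy (n₂ : ℕ) (n₁ : ℕ) with hn | hn | hn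
      · exact ⟨0, e₂, n₁, by omega, rfl, Or.inr ⟨e₂, n₂, rfl, Or.inr ⟨rfl, hn⟩⟩⟩
      · have hnn : n₂ = n₁ := PNat.coe_injective hn
        subst hnn
        have ha : ONote.repr a₂ < ONote.repr a₁ := by
          simp only [ONote.repr] at hlt
          exact lt_of_add_lt_add_left hlt
        obtain ⟨i, e, n, hpre, hα, hβ⟩ := firstDiff h₁.snd h₂.snd ha
        exact ⟨i + 1, e, n, by
          intro j hj
          match j with
          | 0 => rfl
          | k + 1 => exact hpre k (by omega), hα, hβ⟩
      · exact absurd (ONote.lt_def.1 (ONote.oadd_lt_oadd_2 h₁ hn)) (lt_asymm hlt)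
    · exact absurd (ONote.lt_def.1 (ONote.oadd_lt_oadd_1 h₁ (ONote.lt_def.2 he))) (lt_asymm hlt)

theorem CP_eq {α β : ONote} {i : ℕ}
    (hpre : ∀ j < i, (terms α)[j]? = (terms β)[j]?)
    (hne : (terms α)[i]? ≠ (terms β)[i]?) :
    CP α β = i + 1 := by
  classical
  rw [CP, dif_pos ⟨i, hne⟩]
  congr 1
  exact (Nat.find_eq_iff _).2 ⟨hne, fun j hj => not_not_intro (hpre j hj)⟩

theorem CC_eq {α β : ONote} {i : ℕ} (h : CP α β = i + 1) :
    CC α β = (((terms α)[i]?).map (fun p => ((p.2 : ℕ+) : ℕ))).getD 0 := by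
  rw [CC, h]

theorem CE_eq {α β : ONote} {i : ℕ} (h : CP α β = i + 1) :
    CE α β = (((terms α)[i]?).map (fun p => p.1)).getD ONote.zero := by
  rw [CE, h]

theorem CE_cases (α β : ONote) : CE α β = ONote.zero ∨ ∃ n, (CE α β, n) ∈ terms α := by
  rcases h : CP α β with _ | i
  · left; rw [CE, h]
  · rw [CE_eq h]
    rcases hg : (terms α)[i]? with _ | p
    · left; rfl
    · right
      exact ⟨p.2, List.mem_of_getElem? hg⟩

theorem nf_CE {α : ONote} (h : α.NF) (β : ONote) : (CE α β).NF := by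
  rcases CE_cases α β with h' | ⟨n, hn⟩
  · rw [h']; exact ONote.NF.zero
  · exact nf_of_mem_terms h _ hn

theorem CE_lt {α : ONote} {b : Ordinal} (h : α.NFBelow b) (hb : 0 < b) (β : ONote) :
    ONote.repr (CE α β) < b := by
  rcases CE_cases α β with h' | ⟨n, hn⟩
  · rw [h']; simpa using hb
  · exact terms_below h _ hn

theorem pairwise_ne {L : List (ONote × ℕ+)}
    (h : L.Pairwise (fun p q : ONote × ℕ+ => ONote.repr q.1 < ONote.repr p.1))
    {p q} (hp : p ∈ L) (hq : q ∈ L) (he : ONote.repr p.1 = ONote.repr q.1) : p = q := by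
  induction L with
  | nil => exact absurd hp List.not_mem_nil
  | cons a L ih =>
    rw [List.pairwise_cons] at h
    rcases List.mem_cons.1 hp with rfl | hp'
    · rcases List.mem_cons.1 hq with rfl | hq'
      · rfl
      · exact absurd (h.1 q hq') (by rw [he]; exact lt_irrefl _)
    · rcases List.mem_cons.1 hq with rfl | hq'
      · exact absurd (h.1 p hp') (by rw [he]; exact lt_irrefl _)
      · exact ih h.2 hp' hq'

theorem pairwise_get? {R : ONote × ℕ+ → ONote × ℕ+ → Prop} {L : List (ONote × ℕ+)}
    (h : L.Pairwise R) {i j : ℕ} {p q} (hij : i < j)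
    (hp : L[i]? = some p) (hq : L[j]? = some q) : R p q := by
  rw [List.getElem?_eq_some_iff] at hp hq
  obtain ⟨hi, rfl⟩ := hp
  obtain ⟨hj, rfl⟩ := hq
  exact List.pairwise_iff_getElem.1 h i j hi hj hij

/-- Maximal position: `MP 0 = 1`, and for `α = ω^α₁·a₁ + ⋯ + ω^αₙ·aₙ`,
`MP α = max {n, MP α₁, …, MP αₙ}`. -/
def MP : ONote → ℕ
  | ONote.zero => 1
  | ONote.oadd e _ a => max (MP e) (max ((terms a).length + 1) (MP a))

/-- Maximal coefficient: `MC 0 = 0`, and for `α = ω^α₁·a₁ + ⋯ + ω^αₙ·aₙ`,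
`MC α = max {aᵢ, MC αᵢ}`. -/
def MC : ONote → ℕ
  | ONote.zero => 0
  | ONote.oadd e n a => max (MC e) (max ((n : ℕ+) : ℕ) (MC a))

/-- The coefficient of `ω^i` in the Cantor normal form of `α`. -/
def coeff (α : ONote) (i : ℕ) : ℕ :=
  (((terms α).find? (fun p => p.1 = ONote.ofNat i)).map
    (fun p => ((p.2 : ℕ+) : ℕ))).getD 0

theorem coeff_eq {α : ONote} (hNF : α.NF) {k : ℕ} {n : ℕ+}
    (h : (ONote.ofNat k, n) ∈ terms α) : coeff α k = n := by
  rw [coeff]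
  have hfind : (terms α).find? (fun p => p.1 = ONote.ofNat k) = some (ONote.ofNat k, n) := by
    rcases hf : (terms α).find? (fun p => p.1 = ONote.ofNat k) with _ | p
    · rw [List.find?_eq_none] at hf
      exact absurd (by simp) (hf _ h)
    · have hmem := List.mem_of_find?_eq_some hf
      have hpred := List.find?_some hf
      simp only [decide_eq_true_eq] at hpred
      rw [hf, pairwise_ne (pairwise_terms hNF) hmem h (by rw [hpred])]
  rw [hfind]
  rfl

theorem coeff_eq_zero {α : ONote} {k : ℕ} (h : ∀ p ∈ terms α, p.1 ≠ ONote.ofNat k) :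
    coeff α k = 0 := by
  rw [coeff, List.find?_eq_none.2 (by intro p hp; simpa using h p hp)]
  rfl

theorem base_le {l : ℕ} {α β : ONote} (hα : α.NF) (hβ : β.NF)
    (hαb : α.NFBelow ((l + 1 : ℕ) : Ordinal))
    (h : ∀ k < l + 1, coeff α k ≤ coeff β k) : α ≤ β := by
  rw [ONote.le_def]
  by_contra h'
  push_neg at h'
  obtain ⟨i, e₁, n₁, hpre, hget, hcase⟩ := firstDiff hα hβ h'
  have hmem₁ : (e₁, n₁) ∈ terms α := List.mem_of_getElem? hget
  have he₁lt : ONote.repr e₁ < ((l + 1 : ℕ) : Ordinal) := terms_below hαb _ hmem₁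
  obtain ⟨k, hk⟩ := Ordinal.lt_omega0.1 (he₁lt.trans (Ordinal.nat_lt_omega0 _))
  have hkl : k < l + 1 := by rw [hk] at he₁lt; exact_mod_cast he₁lt
  haveI : ONote.NF e₁ := nf_of_mem_terms hα _ hmem₁
  have he₁ : e₁ = ONote.ofNat k := ONote.repr_inj.1 (by rw [ONote.repr_ofNat]; exact hk)
  subst he₁
  have hca : coeff α k = n₁ := coeff_eq hα hmem₁
  have hcb := h k hkl
  rw [hca] at hcb
  rcases hcase with hnone | ⟨e₂, n₂, hget₂, hlex⟩
  · have hz : coeff β k = 0 := by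
      apply coeff_eq_zero
      intro p hp hpe
      obtain ⟨j, hj⟩ := List.mem_iff_getElem?.1 hp
      rcases lt_or_ge j i with hji | hji
      · have hpj : (terms α)[j]? = some p := (hpre j hji).trans hj
        have hlt2 := pairwise_get? (pairwise_terms hα) hji hpj hget
        rw [hpe, ONote.repr_ofNat] at hlt2
        exact lt_irrefl _ hlt2
      · rw [List.getElem?_eq_none_iff] at hnone
        have : (terms β)[j]? = none := List.getElem?_eq_none_iff.2 (le_trans hnone hji)
        rw [hj] at this
        cases this
    rw [hz] at hcb
    exact absurd hcb (not_le.2 n₁.pos)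
  · rw [ONote.repr_ofNat] at hlex
    rcases hlex with he | ⟨rfl, hn⟩
    · have hz : coeff β k = 0 := by
        apply coeff_eq_zero
        intro p hp hpe
        obtain ⟨j, hj⟩ := List.mem_iff_getElem?.1 hp
        rcases lt_trichotomy j i with hji | rfl | hji
        · have hpj : (terms α)[j]? = some p := (hpre j hji).trans hj
          have hlt2 := pairwise_get? (pairwise_terms hα) hji hpj hget
          rw [hpe, ONote.repr_ofNat] at hlt2
          exact lt_irrefl _ hlt2
        · rw [hj] at hget₂
          injection hget₂ with hget₂
          have hkk : ONote.repr (ONote.ofNat k) < (k : Ordinal) := by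
            rw [← hpe, hget₂]; exact he
          rw [ONote.repr_ofNat] at hkk
          exact lt_irrefl _ hkk
        · have hlt2 := pairwise_get? (pairwise_terms hβ) hji hget₂ hj
          rw [hpe, ONote.repr_ofNat] at hlt2
          exact lt_irrefl _ (hlt2.trans he)
      rw [hz] at hcb
      exact absurd hcb (not_le.2 n₁.pos)
    · have hz : coeff β k = n₂ := coeff_eq hβ (List.mem_of_getElem? hget₂)
      rw [hz] at hcb
      omega

/-- `Fdl l d` is the function `F_{d+1}^l` of the paper: it takes `d + 1`
ordinals (dimension `d + 1`) and returns a tuple of natural numbers.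
`F₁^l (ω^l·n_l + ⋯ + ω^0·n₀) = (n_l, …, n₀)` and
`F_{d+1}^l (α₁, …, α_{d+1}) =
  (CP(α₁,α₂), CC(α₁,α₂), F_d^l (CE(α₁,α₂), …, CE(α_d,α_{d+1})))`. -/
noncomputable def Fdl (l : ℕ) : (d : ℕ) → (Fin (d + 1) → ONote) → List ℕ
  | 0, α => ((List.range (l + 1)).reverse).map (coeff (α 0))
  | d + 1, α =>
      CP (α 0) (α 1) :: CC (α 0) (α 1) ::
        Fdl l d (fun i => CE (α i.castSucc) (α i.succ))

/-- The tower `ω_0(l) = l`, `ω_{n+1}(l) = ω^{ω_n(l)}` as an ordinal notation. -/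
def omegaStack : ℕ → ℕ → ONote
  | 0, l => ONote.ofNat l
  | n + 1, l => ONote.oadd (omegaStack n l) 1 ONote.zero

theorem omegaStack_pos : ∀ (n l : ℕ), 0 < ONote.repr (omegaStack n (l + 1))
  | 0, l => by simp [omegaStack, ONote.repr_ofNat]
  | n + 1, l => by
      simp only [omegaStack, ONote.repr, PNat.one_coe, Nat.cast_one, mul_one, add_zero]
      exact Ordinal.opow_pos _ Ordinal.omega0_pos

theorem fdl_le_imp_le (d l : ℕ) (α : Fin (d + 2) → ONote)
    (hNF : ∀ i, (α i).NF)
    (hlt : ∀ i, α i < omegaStack (d + 1) (l + 1))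
    (h : List.Forall₂ (· ≤ ·) (Fdl l d (fun i => α i.castSucc))
      (Fdl l d (fun i => α i.succ))) :
    α 0 ≤ α 1 := by
  induction d with
  | zero =>
    simp only [Fdl, Fin.castSucc_zero, Fin.succ_zero_eq_one] at h
    rw [List.forall₂_map_left_iff, List.forall₂_map_right_iff, List.forall₂_same] at h
    have hb : (α 0).NFBelow ((l + 1 : ℕ) : Ordinal) := by
      apply ONote.NF.below_of_lt' _ (hNF 0)
      have h0 := hlt 0
      rw [ONote.lt_def] at h0
      simpa [omegaStack, ONote.repr, ONote.repr_ofNat] using h0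
    apply base_le (hNF 0) (hNF 1) hb
    intro k hk
    exact h k (by simp [List.mem_reverse, List.mem_range]; omega)
  | succ d ih =>
    simp only [Fdl, Fin.castSucc_zero, Fin.succ_zero_eq_one, Fin.castSucc_one,
      Fin.succ_one_eq_two, Fin.succ_castSucc, List.forall₂_cons] at h
    obtain ⟨hCP, hCC, hF⟩ := h
    have hbelow : ∀ i : Fin (d + 3), (α i).NFBelow (ONote.repr (omegaStack (d + 1) (l + 1))) := by
      intro i
      apply ONote.NF.below_of_lt' _ (hNF i)
      have h0 := hlt i
      rw [ONote.lt_def] at h0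
      simpa [omegaStack, ONote.repr] using h0
    set γ : Fin (d + 2) → ONote := fun i => CE (α i.castSucc) (α i.succ) with hγ
    have key : γ 0 ≤ γ 1 := by
      apply ih γ (fun i => nf_CE (hNF _) _)
      · intro i
        rw [ONote.lt_def]
        exact CE_lt (hbelow _) (omegaStack_pos _ _) _
      · have e1 : (fun i : Fin (d + 1) => γ i.castSucc)
            = fun i => CE (α i.castSucc.castSucc) (α i.succ.castSucc) := by
          funext i
          rw [hγ]
          simp only [Fin.succ_castSucc]
        have e2 : (fun i : Fin (d + 1) => γ i.succ)
            = fun i => CE (α i.castSucc.succ) (α i.succ.succ) := by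
          funext i
          rw [hγ]
          simp only [Fin.succ_castSucc]
        rw [e1, e2]
        exact hF
    have key2 : CE (α 0) (α 1) ≤ CE (α 1) (α 2) := by
      have g0 : γ 0 = CE (α 0) (α 1) := by
        rw [hγ]; simp [Fin.castSucc_zero, Fin.succ_zero_eq_one]
      have g1 : γ 1 = CE (α 1) (α 2) := by
        rw [hγ]; simp [Fin.castSucc_one, Fin.succ_one_eq_two]
      rwa [g0, g1] at key
    rw [ONote.le_def]
    by_contra h'
    push_neg at h'
    obtain ⟨i, e₁, n₁, hpre, hget, hcase⟩ := firstDiff (hNF 0) (hNF 1) h'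
    have hne : (terms (α 0))[i]? ≠ (terms (α 1))[i]? := by
      rw [hget]
      rcases hcase with hn | ⟨e', n', hg, hl⟩
      · rw [hn]; simp
      · rw [hg]
        intro hc
        injection hc with hc
        injection hc with hc1 hc2
        rcases hl with hl | ⟨he, hl⟩
        · rw [← hc1] at hl; exact lt_irrefl _ hl
        · rw [hc2] at hl; exact lt_irrefl _ hl
    have hcp1 : CP (α 0) (α 1) = i + 1 := CP_eq hpre hne
    rw [hcp1] at hCP
    obtain ⟨j, hj, hij⟩ : ∃ j, CP (α 1) (α 2) = j + 1 ∧ i ≤ j :=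
      ⟨CP (α 1) (α 2) - 1, by omega, by omega⟩
    rw [CC_eq hcp1, hget, CC_eq hj] at hCC
    simp only [Option.map_some, Option.getD_some] at hCC
    rcases hg : (terms (α 1))[j]? with _ | p
    · rw [hg] at hCC
      simp only [Option.map_none, Option.getD_none] at hCC
      exact absurd hCC (not_le.2 n₁.pos)
    · rw [hg] at hCC
      simp only [Option.map_some, Option.getD_some] at hCC
      have hCEu : CE (α 0) (α 1) = e₁ := by rw [CE_eq hcp1, hget]; rfl
      have hCEv : CE (α 1) (α 2) = p.1 := by rw [CE_eq hj, hg]; rfl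
      rw [hCEu, hCEv, ONote.le_def] at key2
      rcases hcase with hn | ⟨e₂, n₂, hg₂, hl⟩
      · rw [List.getElem?_eq_none_iff] at hn
        have : (terms (α 1))[j]? = none := List.getElem?_eq_none_iff.2 (le_trans hn hij)
        rw [hg] at this
        cases this
      · rcases eq_or_lt_of_le hij with rfl | hij'
        · rw [hg] at hg₂
          injection hg₂ with hg₂
          rcases hl with hl | ⟨he, hl⟩
          · rw [hg₂] at key2
            exact absurd key2 (not_le.2 hl)
          · rw [hg₂] at hCC
            simp only at hCC
            omega
        · have hlt2 := pairwise_get? (pairwise_terms (hNF 1)) hij' hg₂ hg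
          have he21 : ONote.repr e₂ ≤ ONote.repr e₁ := by
            rcases hl with hl | ⟨rfl, _⟩
            · exact le_of_lt hl
            · exact le_rfl
          exact absurd key2 (not_le.2 (lt_of_lt_of_le hlt2 he21))
end

section
/- For every function f : ℕ → ℕ and every d, c, k, m ∈ ℕ, there exists R such that for every coloring C : [m, R]^{d} → {0,...,c} of d-element subsets there exists a C-homogeneous set H = {h₁ < h₂ < ...} of size at least f(h_k). -/
/-- `H` is homogeneous for the colouring `C` of `d`-element finite sets:
`C` is constant on the `d`-element subsets of `H`. -/
def HomogF (k d : ℕ) (C : Finset ℕ → Fin k) (H : Finset ℕ) : Prop :=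
  ∃ c : Fin k, ∀ s : Finset ℕ, s ⊆ H → s.card = d → C s = c

/-- Homogeneity for a (possibly infinite) set `H ⊆ ℕ`. -/
def HomogS (k d : ℕ) (C : Finset ℕ → Fin k) (H : Set ℕ) : Prop :=
  ∃ c : Fin k, ∀ s : Finset ℕ, ↑s ⊆ H → s.card = d → C s = c

/-- `F` is asymptotically stable: on every increasing chain of finite sets
the value of `F` eventually stabilises. -/
def AsympStable (F : Finset ℕ → ℕ) : Prop :=
  ∀ X : ℕ → Finset ℕ, (∀ i, X i ⊆ X (i + 1)) →
    ∃ i, ∀ j, i ≤ j → F (X j) = F (X i)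

theorem infinite_ramsey (n : ℕ) : ∀ (d : ℕ) (C : Finset ℕ → Fin (n + 1)) (S : Set ℕ),
    S.Infinite → ∃ T : Set ℕ, T ⊆ S ∧ T.Infinite ∧ HomogS (n + 1) d C T := by
  intro d
  induction d with
  | zero =>
    intro C S hS
    exact ⟨S, subset_rfl, hS, C ∅, fun s _ hs => by rw [Finset.card_eq_zero.mp hs]⟩
  | succ d ih =>
    intro C S hS
    have step : ∀ S' : Set ℕ, S'.Infinite → ∃ p : ℕ × Set ℕ × Fin (n + 1),
        p.1 ∈ S' ∧ p.2.1 ⊆ S' ∧ p.2.1.Infinite ∧ (∀ x ∈ p.2.1, p.1 < x) ∧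
        ∀ s : Finset ℕ, ↑s ⊆ p.2.1 → s.card = d → C (insert p.1 s) = p.2.2 := by
      intro S' hS'
      set a := sInf S' with ha
      have haS : a ∈ S' := Nat.sInf_mem hS'.nonempty
      have hdiff : (S' \ Set.Iic a).Infinite := hS'.diff (Set.finite_Iic a)
      obtain ⟨T, hTsub, hTinf, col, hcol⟩ := ih (fun s => C (insert a s)) _ hdiff
      refine ⟨⟨a, T, col⟩, haS, fun x hx => (hTsub hx).1, hTinf, ?_, hcol⟩
      intro x hx
      have := (hTsub hx).2
      simpa using this
    choose! g hg1 hg2 hg3 hg4 hg5 using step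
    let P : ℕ → Set ℕ := fun i => Nat.rec S (fun _ prev => (g prev).2.1) i
    have hP : ∀ i, (P i).Infinite := by
      intro i
      induction i with
      | zero => exact hS
      | succ i ihh => exact hg3 _ ihh
    have hPstep : ∀ i, P (i + 1) ⊆ P i := fun i => hg2 _ (hP i)
    have hPmono : ∀ i j, i ≤ j → P j ⊆ P i := by
      intro i j hij
      induction j with
      | zero => simp_all
      | succ j ihh =>
        rcases Nat.lt_or_ge i (j + 1) with h | h
        · exact (ihh (Nat.lt_succ_iff.mp h)).trans' (hPstep j)
        · have : i = j + 1 := le_antisymm (Nat.le_of_lt_succ (Nat.lt_succ_of_le hij)) h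
          · subst this; exact subset_rfl
    let a : ℕ → ℕ := fun i => (g (P i)).1
    have haP : ∀ i, a i ∈ P i := fun i => hg1 _ (hP i)
    have hlt : ∀ i, ∀ x ∈ P (i + 1), a i < x := fun i => hg4 _ (hP i)
    have hmono : StrictMono a := by
      apply strictMono_nat_of_lt_succ
      intro i
      exact hlt i _ (haP (i + 1))
    obtain ⟨c, hc⟩ := Finite.exists_infinite_fiber (fun i => (g (P i)).2.2)
    have hcI : {i | (g (P i)).2.2 = c}.Infinite := by
      rw [← Set.infinite_coe_iff]
      convert hc using 2
      rfl
    refine ⟨a '' {i | (g (P i)).2.2 = c}, ?_, hcI.image (hmono.injective.injOn), c, ?_⟩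
    · rintro x ⟨i, _, rfl⟩
      exact hPmono 0 i (Nat.zero_le _) (haP i)
    · intro s hs hcard
      have hne : s.Nonempty := Finset.card_pos.mp (by omega)
      set x := s.min' hne with hx
      obtain ⟨i, hi, hxi⟩ := hs (s.min'_mem hne)
      have hsub : ↑(s.erase x) ⊆ P (i + 1) := by
        intro y hy
        rw [Finset.coe_erase] at hy
        obtain ⟨j, hj, rfl⟩ := hs hy.1
        have hxy : x < a j := lt_of_le_of_ne (s.min'_le _ hy.1) (Ne.symm hy.2)
        rw [hx, ← hxi] at hxy
        have hij : i < j := hmono.lt_iff_lt.mp hxy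
        exact hPmono (i + 1) j hij (haP j)
      have hcard' : (s.erase x).card = d := by
        rw [Finset.card_erase_of_mem (s.min'_mem hne)]; omega
      have := hg5 (P i) (hP i) (s.erase x) hsub hcard'
      rw [show (g (P i)).1 = a i from rfl] at this
      rw [hxi, Finset.insert_erase (s.min'_mem hne)] at this
      rw [this, hi]

theorem sort_union_of_lt {K L : Finset ℕ} (h : ∀ x ∈ K, ∀ y ∈ L, x < y) :
    (K ∪ L).sort (· ≤ ·) = K.sort (· ≤ ·) ++ L.sort (· ≤ ·) := by
  have hd : Disjoint K L := Finset.disjoint_left.mpr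
    (fun {a} haK haL => lt_irrefl a (h a haK a haL))
  refine flip (List.Perm.eq_of_pairwise' (Finset.pairwise_sort _ _)) ?_ ?_
  · have h1 : List.Perm ((K ∪ L).sort (· ≤ ·)) ((K ∪ L).toList) := Finset.sort_perm_toList _ _
    have h2 : List.Perm (K.sort (· ≤ ·) ++ L.sort (· ≤ ·)) (K.toList ++ L.toList) :=
      (Finset.sort_perm_toList _ _).append (Finset.sort_perm_toList _ _)
    have h3 : List.Perm (K.toList ++ L.toList) ((K ∪ L).toList) := by
      rw [← Multiset.coe_eq_coe]
      push_cast [Finset.coe_toList]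
      rw [← Finset.disjUnion_eq_union K L hd]
      simp [Finset.disjUnion, ← Multiset.coe_add, Finset.coe_toList]
    exact (h1.trans (h3.symm.trans h2.symm)).symm.symm
  · refine List.pairwise_append.mpr ⟨Finset.pairwise_sort _ _, Finset.pairwise_sort _ _,
      fun x hx y hy => le_of_lt (h x ((Finset.mem_sort _).mp hx) y ((Finset.mem_sort _).mp hy))⟩

theorem strong_adjacent_paris_harrington
    (f : ℕ → ℕ) (d c k m : ℕ) :
    ∃ R : ℕ, ∀ C : Finset ℕ → Fin (c + 1),
      ∃ H : Finset ℕ, ↑H ⊆ Finset.Icc m R ∧ HomogF (c + 1) d C H ∧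
        k ≤ H.card ∧ f ((H.sort (· ≤ ·)).getD (k - 1) 0) ≤ H.card := by
  by_contra hcon
  push_neg at hcon
  choose Cb hCb using hcon
  set U : Ultrafilter ℕ := Filter.hyperfilter ℕ with hU
  have hval : ∀ s : Finset ℕ, ∃ v : Fin (c + 1), ∀ᶠ R in (U : Filter ℕ), Cb R s = v := by
    intro s
    by_contra hno
    push_neg at hno
    have h1 : ∀ v : Fin (c + 1), ∀ᶠ R in (U : Filter ℕ), Cb R s ≠ v :=
      fun v => hno v
    obtain ⟨R, hR⟩ := (Filter.eventually_all.mpr h1).exists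
    exact hR (Cb R s) rfl
  choose C hC using hval
  obtain ⟨T, hTS, hTinf, c₀, hc₀⟩ := infinite_ramsey c d C (Set.Ici m) (Set.Ici_infinite m)
  set k' := max k 1 with hk'
  obtain ⟨K, hKT, hKcard⟩ := hTinf.exists_subset_card_eq k'
  have hKne : K.Nonempty := Finset.card_pos.mp (by omega)
  set M := K.max' hKne with hM
  have hTM : (T ∩ Set.Ioi M).Infinite := by
    refine (hTinf.diff (Set.finite_Iic M)).mono ?_
    intro x hx
    exact ⟨hx.1, by simpa using hx.2⟩
  obtain ⟨L, hLT, hLcard⟩ := hTM.exists_subset_card_eq (f M)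
  have hKL : ∀ x ∈ K, ∀ y ∈ L, x < y :=
    fun x hx y hy => lt_of_le_of_lt (K.le_max' x hx) (hLT hy).2
  have hdisj : Disjoint K L := Finset.disjoint_left.mpr
    (fun {a} haK haL => lt_irrefl a (hKL a haK a haL))
  set H₀ := K ∪ L with hH₀
  have hH₀T : ↑H₀ ⊆ T := by
    rw [hH₀, Finset.coe_union]
    exact Set.union_subset hKT (fun x hx => (hLT hx).1)
  have hcard : H₀.card = k' + f M := by
    rw [hH₀, Finset.card_union_of_disjoint hdisj, hKcard, hLcard]
  have hsort : (H₀.sort (· ≤ ·)).getD (k - 1) 0 = M := by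
    have hkk : k - 1 = k' - 1 := by omega
    rw [hH₀, hkk, sort_union_of_lt hKL,
      List.getD_append _ _ _ _ (by rw [Finset.length_sort, hKcard]; omega)]
    rw [List.getD_eq_getElem _ _ (by rw [Finset.length_sort, hKcard]; omega)]
    have hidx : k' - 1 = (K.sort (· ≤ ·)).length - 1 := by rw [Finset.length_sort, hKcard]
    simp only [hidx]
    exact Finset.sorted_last_eq_max'
  have hEv1 : ∀ᶠ R in (U : Filter ℕ), ∀ s ∈ H₀.powerset, Cb R s = C s :=
    (Filter.eventually_all_finset _).mpr (fun s _ => hC s)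
  have hEv2 : ∀ᶠ R in (U : Filter ℕ), H₀.sup id ≤ R :=
    (Filter.eventually_ge_atTop _).filter_mono Nat.hyperfilter_le_atTop
  obtain ⟨R, hR1, hR2⟩ := (hEv1.and hEv2).exists
  have hIcc : H₀ ⊆ Finset.Icc m R := by
    intro x hx
    rw [Finset.mem_Icc]
    exact ⟨hTS (hH₀T (by exact_mod_cast hx)), le_trans (Finset.le_sup (f := id) hx) hR2⟩
  have hHom : HomogF (c + 1) d (Cb R) H₀ := by
    refine ⟨c₀, fun s hsub hcards => ?_⟩
    rw [hR1 s (Finset.mem_powerset.mpr hsub)]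
    exact hc₀ s ((Finset.coe_subset.mpr hsub).trans hH₀T) hcards
  have hk2 : k ≤ H₀.card := by rw [hcard]; omega
  have hbad := hCb R H₀ hIcc hHom hk2
  rw [hsort, hcard] at hbad
  omega
end
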